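/- Unbiasedness of the longitudinal frequency estimator (Theorem 'est_long'): let p1, q1, p2, q2 ∈ [0,1] with p1 ≠ q1 and p2 ≠ q2, let n be a positive integer, and suppose that among the n users exactly f·n hold the value v (where 0 ≤ f ≤ 1 and f·n is an integer) and each user independently reports v with probability p_s = p1·p2 + (1−p1)·q2 if it holds v and with probability q_s = q1·p2 + (1−q1)·q2 otherwise. Then the estimator f̂ = (N − n·q1·(p2−q2) − n·q2)/(n·(p1−q1)·(p2−q2)), where N is the number of users whose report equals v, satisfies E[f̂] = f. -/

import Mathlib

open MeasureTheory ProbabilityTheory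

/-- Unbiasedness of the longitudinal frequency estimator (Theorem `est_long`). -/
theorem est_long
    {Ω : Type*} [MeasureSpace Ω] [IsProbabilityMeasure (ℙ : Measure Ω)]
    (p1 q1 p2 q2 : ℝ)
    (hp1 : 0 ≤ p1 ∧ p1 ≤ 1) (hq1 : 0 ≤ q1 ∧ q1 ≤ 1)
    (hp2 : 0 ≤ p2 ∧ p2 ≤ 1) (hq2 : 0 ≤ q2 ∧ q2 ≤ 1)
    (h1 : p1 ≠ q1) (h2 : p2 ≠ q2)
    (n : ℕ) (hn : 0 < n)
    (f : ℝ) (hf0 : 0 ≤ f) (hf1 : f ≤ 1)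
    (holds : Fin n → Bool)
    (hcount : (∑ i, if holds i then (1 : ℝ) else 0) = f * n)
    (report : Fin n → Ω → Bool)
    (hmeas : ∀ i, Measurable (report i))
    (hindep : iIndepFun report ℙ)
    (hps : ∀ i, holds i = true →
      ℙ {ω | report i ω = true} = ENNReal.ofReal (p1 * p2 + (1 - p1) * q2))
    (hqs : ∀ i, holds i = false →
      ℙ {ω | report i ω = true} = ENNReal.ofReal (q1 * p2 + (1 - q1) * q2)) :
    ∫ ω, ((∑ i, if report i ω then (1 : ℝ) else 0)
        - (n : ℝ) * q1 * (p2 - q2) - (n : ℝ) * q2)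
        / ((n : ℝ) * (p1 - q1) * (p2 - q2)) ∂ℙ = f := by
  have hps0 : 0 ≤ p1 * p2 + (1 - p1) * q2 := by
    have h1' := mul_nonneg hp1.1 hp2.1
    have h2' := mul_nonneg (by linarith [hp1.2] : (0:ℝ) ≤ 1 - p1) hq2.1
    linarith
  have hqs0 : 0 ≤ q1 * p2 + (1 - q1) * q2 := by
    have h1' := mul_nonneg hq1.1 hp2.1
    have h2' := mul_nonneg (by linarith [hq1.2] : (0:ℝ) ≤ 1 - q1) hq2.1
    linarith
  have hSmeas : ∀ i, MeasurableSet {ω | report i ω = true} :=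
    fun i => (hmeas i) (measurableSet_singleton true)
  have hindfun : ∀ i, (fun ω => if report i ω then (1 : ℝ) else 0)
      = Set.indicator {ω | report i ω = true} (fun _ => (1:ℝ)) := by
    intro i
    funext ω
    by_cases h : report i ω <;> simp [Set.indicator_apply, Set.mem_setOf_eq, h]
  have hint : ∀ i, Integrable (fun ω => if report i ω then (1 : ℝ) else 0) ℙ := by
    intro i
    rw [hindfun i]
    exact (integrable_const (1:ℝ)).indicator (hSmeas i)
  have hval : ∀ i, ∫ ω, (if report i ω then (1 : ℝ) else 0) ∂ℙ
      = (ℙ {ω | report i ω = true}).toReal := by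
    intro i
    rw [hindfun i, integral_indicator_const (1:ℝ) (hSmeas i)]
    simp
    rfl
  have hval' : ∀ i, ∫ ω, (if report i ω then (1 : ℝ) else 0) ∂ℙ
      = (if holds i then (1:ℝ) else 0) * ((p1 * p2 + (1 - p1) * q2) - (q1 * p2 + (1 - q1) * q2))
        + (q1 * p2 + (1 - q1) * q2) := by
    intro i
    rw [hval i]
    cases hhi : holds i with
    | false =>
      rw [hqs i hhi, ENNReal.toReal_ofReal hqs0]; simp
    | true =>
      rw [hps i hhi, ENNReal.toReal_ofReal hps0]; simp
  have hsumint : Integrable (fun ω => ∑ i, if report i ω then (1 : ℝ) else 0) ℙ :=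
    integrable_finset_sum _ (fun i _ => hint i)
  have hmain : ∫ ω, ((∑ i, if report i ω then (1 : ℝ) else 0)
        - (n : ℝ) * q1 * (p2 - q2) - (n : ℝ) * q2)
        / ((n : ℝ) * (p1 - q1) * (p2 - q2)) ∂ℙ
      = ((∫ ω, (∑ i, if report i ω then (1 : ℝ) else 0) ∂ℙ)
        - (n : ℝ) * q1 * (p2 - q2) - (n : ℝ) * q2)
        / ((n : ℝ) * (p1 - q1) * (p2 - q2)) := by
    have hA : Integrable (fun ω => (∑ i, if report i ω then (1 : ℝ) else 0)
        - (n : ℝ) * q1 * (p2 - q2)) ℙ := hsumint.sub (integrable_const _)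
    rw [integral_div]
    congr 1
    rw [integral_sub hA (integrable_const _), integral_sub hsumint (integrable_const _)]
    simp
  rw [hmain, integral_finset_sum _ (fun i _ => hint i)]
  have hsum : (∑ i, ∫ ω, (if report i ω then (1 : ℝ) else 0) ∂ℙ)
      = f * n * ((p1 * p2 + (1 - p1) * q2) - (q1 * p2 + (1 - q1) * q2))
        + n * (q1 * p2 + (1 - q1) * q2) := by
    rw [Finset.sum_congr rfl (fun i _ => hval' i), Finset.sum_add_distrib,
        ← Finset.sum_mul, hcount]
    simp
    ring
  rw [hsum]
  have hn0 : (n : ℝ) ≠ 0 := Nat.cast_ne_zero.mpr hn.ne'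
  have hd1 : p1 - q1 ≠ 0 := sub_ne_zero.mpr h1
  have hd2 : p2 - q2 ≠ 0 := sub_ne_zero.mpr h2
  field_simp
  ring
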